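/- Let (X,d) be a metric space and let S = (X,(φ_j)_{j=1}^L,(p_j)_{j=1}^L) be a GIFS with probabilities of order m in which each φ_j is an (a_0,...,a_{m−1})-contraction. Then the generalized Markov operator M_S is itself an (a_0,...,a_{m−1})-contraction on compactly supported Borel probability measures: d_MK(M_S(μ_0,...,μ_{m−1}), M_S(ν_0,...,ν_{m−1})) ≤ Σ_{i=0}^{m−1} a_i · d_MK(μ_i, ν_i) for all μ_0,...,μ_{m−1}, ν_0,...,ν_{m−1} ∈ P(X). -/

import Mathlib

open MeasureTheory Set

/-- The Monge–Kantorovich (Hutchinson) distance between two measures. -/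
noncomputable def dMK {X : Type*} [MetricSpace X] [MeasurableSpace X]
    (μ ν : Measure X) : ℝ :=
  sSup {s : ℝ | ∃ f : X → ℝ, LipschitzWith 1 f ∧ s = |∫ x, f x ∂μ - ∫ x, f x ∂ν|}

set_option linter.unusedSectionVars false
set_option maxHeartbeats 1000000

lemma ae_mem_of_compl_null {α : Type*} [MeasurableSpace α] {μ : Measure α} {K : Set α}
    (hμK : μ Kᶜ = 0) : ∀ᵐ x ∂μ, x ∈ K := by
  rw [ae_iff]; exact hμK

lemma compactSupp_nonempty {α : Type*} [MeasurableSpace α] {μ : Measure α}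
    [IsProbabilityMeasure μ] {K : Set α} (hμK : μ Kᶜ = 0) : K.Nonempty := by
  rcases K.eq_empty_or_nonempty with h | h
  · exfalso; rw [h, compl_empty] at hμK
    simpa [hμK] using (measure_univ (μ := μ))
  · exact h

section Aux
variable {X : Type*} [MetricSpace X] [MeasurableSpace X] [BorelSpace X]

lemma dMK_nonneg (μ ν : Measure X) : 0 ≤ dMK μ ν := by
  apply Real.sSup_nonneg
  rintro s ⟨f, hf, rfl⟩
  exact abs_nonneg _

lemma lip_integrable {μ : Measure X} [IsProbabilityMeasure μ] {K : Set X}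
    (hK : IsCompact K) (hμK : μ Kᶜ = 0) {f : X → ℝ} {c : NNReal} (hf : LipschitzWith c f) :
    Integrable f μ := by
  obtain ⟨x0, hx0⟩ := compactSupp_nonempty hμK
  obtain ⟨R, hR⟩ := (hK.isBounded).subset_closedBall x0
  refine Integrable.mono' (integrable_const (|f x0| + c * R)) (hf.continuous.aestronglyMeasurable) ?_
  filter_upwards [ae_mem_of_compl_null hμK] with x hx
  have hd : dist x x0 ≤ R := by simpa [Metric.mem_closedBall] using hR hx
  calc ‖f x‖ = |f x| := rfl
    _ ≤ |f x - f x0| + |f x0| := by simpa using abs_add_le (f x - f x0) (f x0)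
    _ ≤ c * R + |f x0| := by
        have h1 : |f x - f x0| ≤ c * dist x x0 := by
          simpa [Real.dist_eq] using hf.dist_le_mul x x0
        nlinarith [NNReal.coe_nonneg c]
    _ = |f x0| + c * R := by ring

lemma bddAbove_dMK_set {μ ν : Measure X} [IsProbabilityMeasure μ] [IsProbabilityMeasure ν]
    {K K' : Set X} (hK : IsCompact K) (hK' : IsCompact K')
    (hμK : μ Kᶜ = 0) (hνK : ν K'ᶜ = 0) :
    BddAbove {s : ℝ | ∃ f : X → ℝ, LipschitzWith 1 f ∧ s = |∫ x, f x ∂μ - ∫ x, f x ∂ν|} := by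
  obtain ⟨x0, hx0⟩ := compactSupp_nonempty hμK
  obtain ⟨R, hR⟩ := ((hK.union hK').isBounded).subset_closedBall x0
  refine ⟨2 * R, ?_⟩
  rintro s ⟨f, hf, rfl⟩
  set g : X → ℝ := fun x => f x - f x0 with hg
  have hgl : LipschitzWith 1 g := LipschitzWith.of_dist_le_mul fun x y => by
    simpa [hg, dist_sub_right] using hf.dist_le_mul x y
  have hμint : Integrable f μ := lip_integrable hK hμK hf
  have hνint : Integrable f ν := lip_integrable hK' hνK hf
  have e1 : ∫ x, f x ∂μ - ∫ x, f x ∂ν = ∫ x, g x ∂μ - ∫ x, g x ∂ν := by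
    rw [integral_sub hμint (integrable_const _), integral_sub hνint (integrable_const _)]
    simp
  rw [e1]
  have hb : ∀ (ρ : Measure X) (Kρ : Set X), Kρ ⊆ K ∪ K' → ρ Kρᶜ = 0 → IsProbabilityMeasure ρ →
      |∫ x, g x ∂ρ| ≤ R := by
    intro ρ Kρ hsub hρ _
    have := norm_integral_le_of_norm_le_const (μ := ρ) (f := g) (C := R) ?_
    · simpa using this.trans_eq (by simp)
    · filter_upwards [ae_mem_of_compl_null hρ] with x hx
      have hd : dist x x0 ≤ R := by
        simpa [Metric.mem_closedBall] using hR (hsub hx)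
      have h1 : |g x| ≤ 1 * dist x x0 := by
        simpa [hg, Real.dist_eq] using hgl.dist_le_mul x x0
      calc ‖g x‖ = |g x| := rfl
        _ ≤ dist x x0 := by linarith
        _ ≤ R := hd
  calc |∫ x, g x ∂μ - ∫ x, g x ∂ν| ≤ |∫ x, g x ∂μ| + |∫ x, g x ∂ν| := abs_sub _ _
    _ ≤ R + R := add_le_add (hb μ K subset_union_left hμK inferInstance)
        (hb ν K' subset_union_right hνK inferInstance)
    _ = 2 * R := by ring

/-- global Lipschitz version -/
lemma abs_integral_sub_le_lip {μ ν : Measure X} [IsProbabilityMeasure μ] [IsProbabilityMeasure ν]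
    {K K' : Set X} (hK : IsCompact K) (hK' : IsCompact K')
    (hμK : μ Kᶜ = 0) (hνK : ν K'ᶜ = 0)
    {a : ℝ} (ha : 0 ≤ a) {G : X → ℝ} (hG : LipschitzWith a.toNNReal G) :
    |∫ x, G x ∂μ - ∫ x, G x ∂ν| ≤ a * dMK μ ν := by
  rcases eq_or_lt_of_le ha with h0 | hpos
  · -- a = 0 : G constant
    have hconst : ∀ x y, G x = G y := by
      intro x y
      have := hG.dist_le_mul x y
      rw [← h0] at this
      simp at this
      exact dist_le_zero.1 (by simpa using this)
    obtain ⟨x1⟩ : Nonempty X := by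
      rcases isEmpty_or_nonempty X with h | h
      · exfalso
        have : μ univ = 1 := measure_univ
        simp [Set.eq_empty_of_isEmpty (univ : Set X)] at this
      · exact h
    have : G = fun _ => G x1 := funext fun x => hconst x x1
    rw [this]
    simp only [integral_const, measure_univ, probReal_univ, ENNReal.toReal_one, smul_eq_mul, one_mul, sub_self,
      abs_zero]
    have h2 : (0:ℝ) ≤ dMK μ ν := by
      apply Real.sSup_nonneg
      rintro s ⟨f, hf, rfl⟩
      exact abs_nonneg _
    nlinarith
  · -- a > 0
    set g : X → ℝ := fun x => a⁻¹ * G x with hg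
    have hgl : LipschitzWith 1 g := LipschitzWith.of_dist_le_mul fun x y => by
      have h1 : dist (G x) (G y) ≤ a * dist x y := by
        simpa [Real.coe_toNNReal a ha] using hG.dist_le_mul x y
      have : dist (g x) (g y) = a⁻¹ * dist (G x) (G y) := by
        simp [hg, Real.dist_eq, ← mul_sub, abs_mul, abs_of_pos (inv_pos.2 hpos)]
      rw [this, NNReal.coe_one, one_mul]
      calc a⁻¹ * dist (G x) (G y) ≤ a⁻¹ * (a * dist x y) := by
            apply mul_le_mul_of_nonneg_left h1 (le_of_lt (inv_pos.2 hpos))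
        _ = dist x y := by field_simp
    have hmem : |∫ x, g x ∂μ - ∫ x, g x ∂ν| ∈
        {s : ℝ | ∃ f : X → ℝ, LipschitzWith 1 f ∧ s = |∫ x, f x ∂μ - ∫ x, f x ∂ν|} :=
      ⟨g, hgl, rfl⟩
    have hle : |∫ x, g x ∂μ - ∫ x, g x ∂ν| ≤ dMK μ ν :=
      le_csSup (bddAbove_dMK_set hK hK' hμK hνK) hmem
    have e1 : ∫ x, g x ∂μ = a⁻¹ * ∫ x, G x ∂μ := by
      simp [hg, integral_const_mul]
    have e2 : ∫ x, g x ∂ν = a⁻¹ * ∫ x, G x ∂ν := by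
      simp [hg, integral_const_mul]
    rw [e1, e2, ← mul_sub, abs_mul, abs_of_pos (inv_pos.2 hpos)] at hle
    calc |∫ x, G x ∂μ - ∫ x, G x ∂ν| = a * (a⁻¹ * |∫ x, G x ∂μ - ∫ x, G x ∂ν|) := by
          field_simp
      _ ≤ a * dMK μ ν := mul_le_mul_of_nonneg_left hle ha

/-- LipschitzOnWith version -/
lemma abs_integral_sub_le_lipOn {μ ν : Measure X} [IsProbabilityMeasure μ] [IsProbabilityMeasure ν]
    {K : Set X} (hK : IsCompact K) (hμK : μ Kᶜ = 0) (hνK : ν Kᶜ = 0)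
    {a : ℝ} (ha : 0 ≤ a) {G : X → ℝ} (hG : LipschitzOnWith a.toNNReal G K) :
    |∫ x, G x ∂μ - ∫ x, G x ∂ν| ≤ a * dMK μ ν := by
  obtain ⟨g, hgl, hgeq⟩ := hG.extend_real
  have e1 : ∫ x, G x ∂μ = ∫ x, g x ∂μ :=
    integral_congr_ae ((ae_mem_of_compl_null hμK).mono fun x hx => (hgeq hx))
  have e2 : ∫ x, G x ∂ν = ∫ x, g x ∂ν :=
    integral_congr_ae ((ae_mem_of_compl_null hνK).mono fun x hx => (hgeq hx))
  rw [e1, e2]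
  exact abs_integral_sub_le_lip hK hK hμK hνK ha hgl

lemma pi_compl_null {n : ℕ} (μ : Fin n → Measure X) [∀ i, SigmaFinite (μ i)]
    (K : Fin n → Set X) (hμK : ∀ i, μ i (K i)ᶜ = 0) :
    Measure.pi μ (univ.pi K)ᶜ = 0 := by
  have hsub : (univ.pi K)ᶜ ⊆ ⋃ i, Function.eval i ⁻¹' (K i)ᶜ := by
    intro x hx
    simp only [mem_compl_iff, mem_univ_pi, not_forall] at hx
    obtain ⟨i, hi⟩ := hx
    exact mem_iUnion.2 ⟨i, hi⟩
  exact measure_mono_null hsub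
    (measure_iUnion_null fun i => Measure.pi_eval_preimage_null _ (hμK i))

lemma master : ∀ (n : ℕ) (a : Fin n → ℝ), (∀ i, 0 ≤ a i) →
    ∀ (μ ν : Fin n → Measure X), (∀ i, IsProbabilityMeasure (μ i)) →
    (∀ i, IsProbabilityMeasure (ν i)) →
    ∀ (K : Fin n → Set X), (∀ i, IsCompact (K i)) → (∀ i, μ i (K i)ᶜ = 0) →
    (∀ i, ν i (K i)ᶜ = 0) →
    ∀ (F : (Fin n → X) → ℝ) (C : ℝ), Measurable F → (∀ x, |F x| ≤ C) →
    (∀ x y : Fin n → X, (∀ i, x i ∈ K i) → (∀ i, y i ∈ K i) →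
      |F x - F y| ≤ ∑ i, a i * dist (x i) (y i)) →
    |∫ x, F x ∂Measure.pi μ - ∫ x, F x ∂Measure.pi ν| ≤ ∑ i, a i * dMK (μ i) (ν i) := by
  intro n
  induction n with
  | zero =>
    intro a ha μ ν hμP hνP K hKc hμK hνK F C hFm hFb hFl
    haveI := hμP; haveI := hνP
    rw [integral_unique (μ := Measure.pi μ) F, integral_unique (μ := Measure.pi ν) F]
    simp
  | succ n IH =>
    intro a ha μ ν hμP hνP K hKc hμK hνK F C hFm hFb hFl
    haveI := hμP; haveI := hνP
    set e := MeasurableEquiv.piFinSuccAbove (fun _ : Fin (n + 1) => X) 0 with he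
    set μ' : Fin n → Measure X := fun j => μ ((0 : Fin (n + 1)).succAbove j) with hμ'
    set ν' : Fin n → Measure X := fun j => ν ((0 : Fin (n + 1)).succAbove j) with hν'
    set K' : Fin n → Set X := fun j => K ((0 : Fin (n + 1)).succAbove j) with hK'
    set a' : Fin n → ℝ := fun j => a ((0 : Fin (n + 1)).succAbove j) with ha'
    haveI : ∀ j, IsProbabilityMeasure (μ' j) := fun j => hμP _
    haveI : ∀ j, IsProbabilityMeasure (ν' j) := fun j => hνP _
    set F' : X × (Fin n → X) → ℝ := fun z => F (e.symm z) with hF'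
    have hF'm : Measurable F' := hFm.comp e.symm.measurable
    have hF'b : ∀ z, |F' z| ≤ C := fun z => hFb _
    set ins : X → (Fin n → X) → (Fin (n+1) → X) :=
      fun x r => Fin.insertNth (α := fun _ : Fin (n+1) => X) 0 x r with hins
    have hesymm : ∀ (x : X) (r : Fin n → X), e.symm (x, r) = ins x r := by
      intro x r
      rfl
    -- the three integrals
    have hPμ := measurePreserving_piFinSuccAbove μ 0
    have hPν := measurePreserving_piFinSuccAbove ν 0
    have hμeq : ∫ x, F x ∂Measure.pi μ = ∫ z, F' z ∂((μ 0).prod (Measure.pi μ')) := by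
      rw [← hPμ.integral_comp e.measurableEmbedding F']
      exact integral_congr_ae (Filter.Eventually.of_forall fun x =>
        congrArg F (e.symm_apply_apply x).symm)
    have hνeq : ∫ x, F x ∂Measure.pi ν = ∫ z, F' z ∂((ν 0).prod (Measure.pi ν')) := by
      rw [← hPν.integral_comp e.measurableEmbedding F']
      exact integral_congr_ae (Filter.Eventually.of_forall fun x =>
        congrArg F (e.symm_apply_apply x).symm)
    -- integrability of F' w.r.t. any probability measure
    have hint : ∀ (ρ : Measure (X × (Fin n → X))), IsProbabilityMeasure ρ → Integrable F' ρ := by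
      intro ρ hρ
      exact Integrable.mono' (integrable_const C) hF'm.aestronglyMeasurable
        (Filter.Eventually.of_forall fun z => hF'b z)
    set Gμ : X → ℝ := fun x => ∫ r, F' (x, r) ∂Measure.pi μ' with hGμ
    set Gν : X → ℝ := fun x => ∫ r, F' (x, r) ∂Measure.pi ν' with hGν
    have hfub1 : ∫ z, F' z ∂((μ 0).prod (Measure.pi μ')) = ∫ x, Gμ x ∂(μ 0) :=
      integral_prod F' (hint _ inferInstance)
    have hfub3 : ∫ z, F' z ∂((ν 0).prod (Measure.pi ν')) = ∫ x, Gν x ∂(ν 0) :=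
      integral_prod F' (hint _ inferInstance)
    -- basic facts
    have hXne : Nonempty X := by
      by_contra h
      rw [not_nonempty_iff] at h
      have h1 : (μ 0) univ = 1 := measure_univ
      rw [Set.eq_empty_of_isEmpty (univ : Set X)] at h1
      simp at h1
    have hC : 0 ≤ C := le_trans (abs_nonneg _) (hFb (Classical.arbitrary _))
    have hslice : ∀ (x : X) (ρ : Measure (Fin n → X)), IsProbabilityMeasure ρ →
        Integrable (fun r => F' (x, r)) ρ := by
      intro x ρ hρ
      exact Integrable.mono' (integrable_const C)
        (hF'm.comp measurable_prodMk_left).aestronglyMeasurable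
        (Filter.Eventually.of_forall fun r => hF'b _)
    have hKp' : Measure.pi μ' (univ.pi K')ᶜ = 0 := pi_compl_null μ' K' (fun j => hμK _)
    -- membership of insertNth vectors
    have hmemins : ∀ (x : X) (r : Fin n → X), x ∈ K 0 → (∀ j, r j ∈ K' j) →
        ∀ i, ins x r i ∈ K i := by
      intro x r hx hr
      rw [Fin.forall_iff_succAbove (0 : Fin (n+1))]
      constructor
      · simpa [hins, Fin.insertNth_apply_same] using hx
      · intro j
        simpa [hins, hK', Fin.insertNth_apply_succAbove] using hr j
    -- Term 1 : Lipschitz property of Gμ on K 0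
    have hT1 : |∫ x, Gμ x ∂(μ 0) - ∫ x, Gμ x ∂(ν 0)| ≤ a 0 * dMK (μ 0) (ν 0) := by
      refine abs_integral_sub_le_lipOn (hKc 0) (hμK 0) (hνK 0) (ha 0) ?_
      rw [lipschitzOnWith_iff_dist_le_mul]
      intro x hx y hy
      rw [Real.coe_toNNReal _ (ha 0)]
      have hdiff : Gμ x - Gμ y = ∫ r, (F' (x, r) - F' (y, r)) ∂Measure.pi μ' := by
        rw [integral_sub (hslice x _ inferInstance) (hslice y _ inferInstance)]
      rw [Real.dist_eq, hdiff]
      have hb := norm_integral_le_of_norm_le_const (μ := Measure.pi μ')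
        (f := fun r => F' (x, r) - F' (y, r)) (C := a 0 * dist x y) ?_
      · simpa using hb
      · filter_upwards [ae_mem_of_compl_null hKp'] with r hr
        have hrK : ∀ j, r j ∈ K' j := fun j => (mem_univ_pi.mp hr) j
        have h1 := hFl (ins x r) (ins y r)
          (hmemins x r hx hrK) (hmemins y r hy hrK)
        rw [Fin.sum_univ_succAbove _ 0] at h1
        simp only [hins, Fin.insertNth_apply_same, Fin.insertNth_apply_succAbove, dist_self,
          mul_zero, Finset.sum_const_zero, add_zero] at h1
        calc ‖F' (x, r) - F' (y, r)‖ = |F (ins x r)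
              - F (ins y r)| := by rw [hF']; simp [hesymm]
          _ ≤ a 0 * dist x y := h1
    -- Term 2
    have hGμm : StronglyMeasurable Gμ := hF'm.stronglyMeasurable.integral_prod_right'
    have hGνm : StronglyMeasurable Gν := hF'm.stronglyMeasurable.integral_prod_right'
    have hGbound : ∀ (x : X) (ρ : Measure (Fin n → X)) (_ : IsProbabilityMeasure ρ),
        ‖∫ r, F' (x, r) ∂ρ‖ ≤ C := by
      intro x ρ hρ
      have := norm_integral_le_of_norm_le_const (μ := ρ) (f := fun r => F' (x, r)) (C := C)
        (Filter.Eventually.of_forall fun r => hF'b _)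
      simpa using this
    have hGμint : Integrable Gμ (ν 0) :=
      Integrable.mono' (integrable_const C) hGμm.aestronglyMeasurable
        (Filter.Eventually.of_forall fun x => hGbound x _ inferInstance)
    have hGνint : Integrable Gν (ν 0) :=
      Integrable.mono' (integrable_const C) hGνm.aestronglyMeasurable
        (Filter.Eventually.of_forall fun x => hGbound x _ inferInstance)
    have hT2 : |∫ x, Gμ x ∂(ν 0) - ∫ x, Gν x ∂(ν 0)| ≤ ∑ j, a' j * dMK (μ' j) (ν' j) := by
      rw [← integral_sub hGμint hGνint]
      have hb := norm_integral_le_of_norm_le_const (μ := ν 0)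
        (f := fun x => Gμ x - Gν x) (C := ∑ j, a' j * dMK (μ' j) (ν' j)) ?_
      · simpa using hb
      · filter_upwards [ae_mem_of_compl_null (hνK 0)] with x hx
        have hIH := IH a' (fun j => ha _) μ' ν' (fun j => inferInstance) (fun j => inferInstance)
          K' (fun j => hKc _) (fun j => hμK _) (fun j => hνK _)
          (fun r => F' (x, r)) C (hF'm.comp measurable_prodMk_left) (fun r => hF'b _) ?_
        · simpa [hGμ, hGν] using hIH
        · intro r r' hr hr'
          have h1 := hFl (ins x r) (ins x r')
            (hmemins x r hx hr) (hmemins x r' hx hr')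
          rw [Fin.sum_univ_succAbove _ 0] at h1
          simp only [hins, Fin.insertNth_apply_same, Fin.insertNth_apply_succAbove, dist_self,
            mul_zero, zero_add] at h1
          calc |F' (x, r) - F' (x, r')| = |F (ins x r)
                - F (ins x r')| := by rw [hF']; simp [hesymm]
            _ ≤ ∑ j, a' j * dist (r j) (r' j) := h1
    -- assemble
    calc |∫ x, F x ∂Measure.pi μ - ∫ x, F x ∂Measure.pi ν|
        = |∫ x, Gμ x ∂(μ 0) - ∫ x, Gν x ∂(ν 0)| := by rw [hμeq, hνeq, hfub1, hfub3]
      _ ≤ |∫ x, Gμ x ∂(μ 0) - ∫ x, Gμ x ∂(ν 0)| + |∫ x, Gμ x ∂(ν 0) - ∫ x, Gν x ∂(ν 0)| :=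
          abs_sub_le _ _ _
      _ ≤ a 0 * dMK (μ 0) (ν 0) + ∑ j, a' j * dMK (μ' j) (ν' j) := add_le_add hT1 hT2
      _ = ∑ i, a i * dMK (μ i) (ν i) :=
          (Fin.sum_univ_succAbove (fun i => a i * dMK (μ i) (ν i)) 0).symm

/-- A measurable function agreeing with a continuous `φ` on a compact product set,
whose range is contained in the image of the compact product set. -/
lemma exists_measurable_surrogate {m : ℕ} (K : Fin m → Set X) (hKc : ∀ i, IsCompact (K i))
    (hKne : ∀ i, (K i).Nonempty) (φ : (Fin m → X) → X) (hφc : Continuous φ) :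
    ∃ g : (Fin m → X) → X, Measurable g ∧
      (∀ x, (∀ i, x i ∈ K i) → g x = φ x) ∧
      (∀ x, g x ∈ φ '' (univ.pi K)) := by
  classical
  haveI : ∀ i, CompactSpace (K i) := fun i => isCompact_iff_compactSpace.mp (hKc i)
  set valf : Fin m → X → X := fun i x => if x ∈ K i then x else (hKne i).some with hvalf
  have hvalf_mem : ∀ i x, valf i x ∈ K i := by
    intro i x
    simp only [hvalf]
    split_ifs with h
    · exact h
    · exact (hKne i).some_mem
  have hvalf_meas : ∀ i, Measurable (valf i) :=
    fun i => Measurable.ite (hKc i).isClosed.measurableSet measurable_id measurable_const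
  set q : (i : Fin m) → X → (K i) := fun i x => ⟨valf i x, hvalf_mem i x⟩ with hq
  have hq_meas : ∀ i, Measurable (q i) := fun i => (hvalf_meas i).subtype_mk
  set ψ : (Π i : Fin m, (K i)) → X := fun y => φ (fun i => (y i : X)) with hψ
  have hψc : Continuous ψ :=
    hφc.comp (continuous_pi fun i => continuous_subtype_val.comp (continuous_apply i))
  have hψm : Measurable ψ := hψc.measurable
  refine ⟨fun x => ψ (fun i => q i (x i)), ?_, ?_, ?_⟩
  · exact hψm.comp (measurable_pi_lambda _ fun i => (hq_meas i).comp (measurable_pi_apply i))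
  · intro x hx
    simp only [hψ, hq, hvalf]
    congr 1
    funext i
    simp [hx i]
  · intro x
    exact ⟨fun i => valf i (x i), fun i _ => hvalf_mem i (x i), rfl⟩

end Aux

/-- main theorem -/
theorem stmt9 {X : Type*} [MetricSpace X] [MeasurableSpace X] [BorelSpace X]
    {m L : ℕ} (hm : 1 ≤ m) (hL : 0 < L)
    (φ : Fin L → (Fin m → X) → X) (hφc : ∀ j, Continuous (φ j))
    (p : Fin L → NNReal) (hp : ∀ j, 0 < p j) (hp1 : ∑ j, p j = 1)
    (a : Fin m → ℝ) (ha : ∀ i, 0 ≤ a i)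
    (hφ : ∀ j, ∀ x y : Fin m → X,
      dist (φ j x) (φ j y) ≤ ∑ i, a i * dist (x i) (y i))
    (μ ν : Fin m → Measure X)
    [∀ i, IsProbabilityMeasure (μ i)] [∀ i, IsProbabilityMeasure (ν i)]
    (hμ : ∀ i, ∃ K : Set X, IsCompact K ∧ μ i Kᶜ = 0)
    (hν : ∀ i, ∃ K : Set X, IsCompact K ∧ ν i Kᶜ = 0) :
    dMK (∑ j, p j • (Measure.pi μ).map (φ j)) (∑ j, p j • (Measure.pi ν).map (φ j))
      ≤ ∑ i, a i * dMK (μ i) (ν i) := by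
  classical
  choose Kμ hKμc hKμ0 using hμ
  choose Kν hKνc hKν0 using hν
  set K : Fin m → Set X := fun i => Kμ i ∪ Kν i with hK
  have hKc : ∀ i, IsCompact (K i) := fun i => (hKμc i).union (hKνc i)
  have hμK : ∀ i, μ i (K i)ᶜ = 0 := fun i =>
    measure_mono_null (compl_subset_compl.2 subset_union_left) (hKμ0 i)
  have hνK : ∀ i, ν i (K i)ᶜ = 0 := fun i =>
    measure_mono_null (compl_subset_compl.2 subset_union_right) (hKν0 i)
  have hKne : ∀ i, (K i).Nonempty := fun i => compactSupp_nonempty (hμK i)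
  -- surrogates
  have hsur : ∀ j, ∃ g : (Fin m → X) → X, Measurable g ∧
      (∀ x, (∀ i, x i ∈ K i) → g x = φ j x) ∧
      (∀ x, g x ∈ φ j '' (univ.pi K)) :=
    fun j => exists_measurable_surrogate K hKc hKne (φ j) (hφc j)
  choose g hgm hgeq hgmem using hsur
  -- compact images
  set Cset : Fin L → Set X := fun j => φ j '' (univ.pi K) with hCset
  have hCc : ∀ j, IsCompact (Cset j) := fun j => (isCompact_univ_pi hKc).image (hφc j)
  -- a.e. equality of φ j and g j
  have hpiμ0 : Measure.pi μ (univ.pi K)ᶜ = 0 := pi_compl_null μ K hμK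
  have hpiν0 : Measure.pi ν (univ.pi K)ᶜ = 0 := pi_compl_null ν K hνK
  have haeμ : ∀ j, (φ j) =ᵐ[Measure.pi μ] (g j) := by
    intro j
    filter_upwards [ae_mem_of_compl_null hpiμ0] with x hx
    exact (hgeq j x (fun i => mem_univ_pi.mp hx i)).symm
  have haeν : ∀ j, (φ j) =ᵐ[Measure.pi ν] (g j) := by
    intro j
    filter_upwards [ae_mem_of_compl_null hpiν0] with x hx
    exact (hgeq j x (fun i => mem_univ_pi.mp hx i)).symm
  have hmapμ : ∀ j, (Measure.pi μ).map (φ j) = (Measure.pi μ).map (g j) :=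
    fun j => Measure.map_congr (haeμ j)
  have hmapν : ∀ j, (Measure.pi ν).map (φ j) = (Measure.pi ν).map (g j) :=
    fun j => Measure.map_congr (haeν j)
  -- support of mapped measures
  haveI hPμj : ∀ j, IsProbabilityMeasure ((Measure.pi μ).map (g j)) :=
    fun j => Measure.isProbabilityMeasure_map (hgm j).aemeasurable
  haveI hPνj : ∀ j, IsProbabilityMeasure ((Measure.pi ν).map (g j)) :=
    fun j => Measure.isProbabilityMeasure_map (hgm j).aemeasurable
  have hsupμ : ∀ j, (Measure.pi μ).map (g j) (Cset j)ᶜ = 0 := by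
    intro j
    rw [Measure.map_apply (hgm j) (hCc j).isClosed.measurableSet.compl]
    have : (g j) ⁻¹' (Cset j)ᶜ = ∅ := by
      apply eq_empty_of_forall_notMem
      intro x hx
      exact hx (hgmem j x)
    rw [this, measure_empty]
  have hsupν : ∀ j, (Measure.pi ν).map (g j) (Cset j)ᶜ = 0 := by
    intro j
    rw [Measure.map_apply (hgm j) (hCc j).isClosed.measurableSet.compl]
    have : (g j) ⁻¹' (Cset j)ᶜ = ∅ := by
      apply eq_empty_of_forall_notMem
      intro x hx
      exact hx (hgmem j x)
    rw [this, measure_empty]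
  -- RHS is nonnegative
  have hRHS : 0 ≤ ∑ i, a i * dMK (μ i) (ν i) :=
    Finset.sum_nonneg fun i _ => mul_nonneg (ha i) (dMK_nonneg _ _)
  -- rewrite the goal with surrogates
  have hgoal : (∑ j, p j • (Measure.pi μ).map (φ j)) = ∑ j, p j • (Measure.pi μ).map (g j) := by
    refine Finset.sum_congr rfl fun j _ => by rw [hmapμ j]
  have hgoal' : (∑ j, p j • (Measure.pi ν).map (φ j)) = ∑ j, p j • (Measure.pi ν).map (g j) := by
    refine Finset.sum_congr rfl fun j _ => by rw [hmapν j]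
  rw [hgoal, hgoal']
  -- now bound the sSup
  apply Real.sSup_le _ hRHS
  rintro s ⟨f, hf, rfl⟩
  -- integrals over the summed measures
  have hintμ : ∀ j, Integrable f ((Measure.pi μ).map (g j)) :=
    fun j => lip_integrable (hCc j) (hsupμ j) hf
  have hintν : ∀ j, Integrable f ((Measure.pi ν).map (g j)) :=
    fun j => lip_integrable (hCc j) (hsupν j) hf
  have hsumμ : ∫ x, f x ∂(∑ j, p j • (Measure.pi μ).map (g j))
      = ∑ j, (p j : ℝ) * ∫ x, f x ∂((Measure.pi μ).map (g j)) := by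
    rw [integral_finset_sum_measure (fun j _ => (hintμ j).smul_measure_nnreal)]
    exact Finset.sum_congr rfl fun j _ => by
      rw [integral_smul_nnreal_measure]; simp [NNReal.smul_def]
  have hsumν : ∫ x, f x ∂(∑ j, p j • (Measure.pi ν).map (g j))
      = ∑ j, (p j : ℝ) * ∫ x, f x ∂((Measure.pi ν).map (g j)) := by
    rw [integral_finset_sum_measure (fun j _ => (hintν j).smul_measure_nnreal)]
    exact Finset.sum_congr rfl fun j _ => by
      rw [integral_smul_nnreal_measure]; simp [NNReal.smul_def]
  rw [hsumμ, hsumν, ← Finset.sum_sub_distrib]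
  -- per-j bound
  have hj : ∀ j, |∫ x, f x ∂((Measure.pi μ).map (g j)) - ∫ x, f x ∂((Measure.pi ν).map (g j))|
      ≤ ∑ i, a i * dMK (μ i) (ν i) := by
    intro j
    rw [integral_map (hgm j).aemeasurable hf.continuous.aestronglyMeasurable,
      integral_map (hgm j).aemeasurable hf.continuous.aestronglyMeasurable]
    -- compact image gives a bound for f ∘ g j
    have hCne : (Cset j).Nonempty := ⟨φ j (fun i => (hKne i).some),
      ⟨fun i => (hKne i).some, fun i _ => (hKne i).some_mem, rfl⟩⟩
    obtain ⟨z, hz, hzmax⟩ := (hCc j).exists_isMaxOn hCne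
      (continuous_abs.comp hf.continuous).continuousOn
    refine master m a ha μ ν (fun i => inferInstance) (fun i => inferInstance) K hKc hμK hνK
      (fun x => f (g j x)) (|f z|) (hf.continuous.measurable.comp (hgm j)) ?_ ?_
    · intro x
      exact hzmax (hgmem j x)
    · intro x y hx hy
      show |f (g j x) - f (g j y)| ≤ _
      rw [hgeq j x hx, hgeq j y hy]
      have h1 : dist (f (φ j x)) (f (φ j y)) ≤ 1 * dist (φ j x) (φ j y) := hf.dist_le_mul _ _
      rw [one_mul] at h1
      calc |f (φ j x) - f (φ j y)| = dist (f (φ j x)) (f (φ j y)) := (Real.dist_eq _ _).symm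
        _ ≤ dist (φ j x) (φ j y) := h1
        _ ≤ ∑ i, a i * dist (x i) (y i) := hφ j x y
  calc |∑ j, ((p j : ℝ) * ∫ x, f x ∂((Measure.pi μ).map (g j))
        - (p j : ℝ) * ∫ x, f x ∂((Measure.pi ν).map (g j)))|
      ≤ ∑ j, |(p j : ℝ) * ∫ x, f x ∂((Measure.pi μ).map (g j))
        - (p j : ℝ) * ∫ x, f x ∂((Measure.pi ν).map (g j))| := Finset.abs_sum_le_sum_abs _ _
    _ ≤ ∑ j, (p j : ℝ) * (∑ i, a i * dMK (μ i) (ν i)) := by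
        refine Finset.sum_le_sum fun j _ => ?_
        rw [← mul_sub, abs_mul, abs_of_nonneg (NNReal.coe_nonneg _)]
        exact mul_le_mul_of_nonneg_left (hj j) (NNReal.coe_nonneg _)
    _ = (∑ j, (p j : ℝ)) * (∑ i, a i * dMK (μ i) (ν i)) := by rw [Finset.sum_mul]
    _ = ∑ i, a i * dMK (μ i) (ν i) := by
        have : (∑ j, (p j : ℝ)) = 1 := by
          rw [← NNReal.coe_sum, hp1, NNReal.coe_one]
        rw [this, one_mul]
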